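/- arXiv:2201.07979 — 2 statements merged into one kernel-verified Lean document; each statement's English description precedes it below -/
import Mathlib

section
/- Ephemeris-time reparametrization yields Newton's second law: let N ≥ 1, let m_1,…,m_N be positive reals, let U ⊆ (ℝ³)^N be open, let V : U → ℝ be continuously differentiable, let J ⊆ ℝ be an open interval, let f : J → ℝ be positive and continuously differentiable, and let q : J → U be twice differentiable satisfying, for each I and all λ ∈ J, d/dλ (f(λ) · m_I q_I′(λ)) = −(1/f(λ)) · ∇_{q_I} V(q(λ)). Let t : J → ℝ be a primitive of 1/f (so t′ = 1/f > 0, and t is a C¹ bijection onto the interval t(J) with inverse s). Then the reparametrized curve r := q ∘ s satisfies Newton's second law: m_I r̈_I(τ) = −∇_{q_I} V(r(τ)) for all I and all τ ∈ t(J). -/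
open Topology Filter


/-- The gradient of `V` with respect to the position of particle `I`, the other particles
being held fixed. -/
noncomputable def particleGrad (N : ℕ)
    (V : (Fin N → EuclideanSpace ℝ (Fin 3)) → ℝ)
    (x : Fin N → EuclideanSpace ℝ (Fin 3)) (I : Fin N) : EuclideanSpace ℝ (Fin 3) :=
  gradient (fun y => V (Function.update x I y)) (x I)

/-- **ephemeris time yields Newton's second law.** Suppose `q` satisfies the
Euler–Lagrange equations of Jacobi's timeless action in the form
`d/dλ (f(λ) · m_I q_I′(λ)) = −(1/f(λ)) ∇_{q_I} V(q(λ))` on an open interval `J`, where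
`f > 0` is `C¹` on `J`.  Let `τ` be a primitive of `1/f` on `J` and let `s` be its inverse.
Then the reparametrized curve `r = q ∘ s` satisfies Newton's second law
`m_I r̈_I(σ) = −∇_{q_I} V(r(σ))` for all `σ ∈ τ(J)`. -/
theorem ephemeris_time_newton (N : ℕ) (hN : 1 ≤ N) (m : Fin N → ℝ) (hm : ∀ I, 0 < m I)
    (U : Set (Fin N → EuclideanSpace ℝ (Fin 3))) (hUo : IsOpen U)
    (V : (Fin N → EuclideanSpace ℝ (Fin 3)) → ℝ) (hV : ContDiffOn ℝ 1 V U)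
    (J : Set ℝ) (hJo : IsOpen J) (hJc : J.OrdConnected)
    (f : ℝ → ℝ) (hfpos : ∀ l ∈ J, 0 < f l) (hf : ContDiffOn ℝ 1 f J)
    (q v : ℝ → Fin N → EuclideanSpace ℝ (Fin 3))
    (hqU : ∀ l ∈ J, q l ∈ U)
    (hq : ∀ I, ∀ l ∈ J, HasDerivAt (fun u => q u I) (v l I) l)
    (heq : ∀ I, ∀ l ∈ J,
      HasDerivAt (fun u => (f u * m I) • v u I) (-(f l)⁻¹ • particleGrad N V (q l) I) l)
    (τ s : ℝ → ℝ)
    (hτ : ∀ l ∈ J, HasDerivAt τ (1 / f l) l)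
    (hs : ∀ l ∈ J, s (τ l) = l) :
    ∀ I, ∀ σ ∈ τ '' J,
      m I • deriv (deriv fun u => q (s u) I) σ = -particleGrad N V (q (s σ)) I := by
  -- τ is C¹ on J, hence strictly differentiable at each point of J
  have hτcd : ContDiffOn ℝ 1 τ J := by
    have h10 : (1 : WithTop ℕ∞) = 0 + 1 := by norm_num
    rw [h10, contDiffOn_succ_iff_deriv_of_isOpen hJo]
    refine ⟨fun l hl => ((hτ l hl).differentiableAt).differentiableWithinAt, by simp, ?_⟩
    have : ContDiffOn ℝ 0 (fun l => 1 / f l) J := by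
      refine ContDiffOn.div contDiffOn_const (hf.of_le (by norm_num))
        (fun l hl => (hfpos l hl).ne')
    exact this.congr fun l hl => ((hτ l hl).deriv)
  have hτs : ∀ l ∈ J, HasStrictDerivAt τ (1 / f l) l := by
    intro l hl
    have h := (hτcd.contDiffAt (hJo.mem_nhds hl)).hasStrictDerivAt one_ne_zero
    rwa [(hτ l hl).deriv] at h
  -- s has derivative f l at τ l, for l ∈ J
  have hsder : ∀ l ∈ J, HasDerivAt s (f l) (τ l) := by
    intro l hl
    have hne : (1 / f l) ≠ 0 := by
      have := hfpos l hl; positivity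
    have hloc : ∀ᶠ x in 𝓝 l, s (τ x) = x :=
      Filter.eventually_of_mem (hJo.mem_nhds hl) hs
    have := ((hτs l hl).to_local_left_inverse hne hloc).hasDerivAt
    simpa using this
  -- τ '' J is a neighborhood of each of its points
  have himg : ∀ l ∈ J, τ '' J ∈ 𝓝 (τ l) := by
    intro l hl
    have hne : (1 / f l) ≠ 0 := by
      have := hfpos l hl; positivity
    rw [← (hτs l hl).map_nhds_eq hne]
    exact Filter.image_mem_map (hJo.mem_nhds hl)
  intro I σ₀ hσ₀
  obtain ⟨l₀, hl₀, rfl⟩ := hσ₀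
  -- the velocity of the reparametrized curve
  have h1 : ∀ l ∈ J, HasDerivAt (fun u => q (s u) I) (f l • v l I) (τ l) := by
    intro l hl
    have hcomp := HasDerivAt.scomp (τ l)
      (by rw [hs l hl]; exact hq I l hl) (hsder l hl)
    simpa [hs l hl, Function.comp_def] using hcomp
  -- derivative of l ↦ f l • v l I
  have h2 : ∀ l ∈ J, HasDerivAt (fun u => f u • v u I)
      ((m I)⁻¹ • (-(f l)⁻¹ • particleGrad N V (q l) I)) l := by
    intro l hl
    have := (heq I l hl).const_smul ((m I)⁻¹)
    have hfe : (fun u => (m I)⁻¹ • ((f u * m I) • v u I)) = fun u => f u • v u I := by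
      funext u
      rw [smul_smul]
      congr 1
      field_simp [(hm I).ne']
    rw [← hfe]; exact this
  -- deriv (fun u => q (s u) I) agrees with fun σ => f (s σ) • v (s σ) I near τ l₀
  have hev : (deriv fun u => q (s u) I) =ᶠ[𝓝 (τ l₀)] fun σ => f (s σ) • v (s σ) I := by
    filter_upwards [himg l₀ hl₀] with σ hσ
    obtain ⟨l, hl, rfl⟩ := hσ
    rw [(h1 l hl).deriv, hs l hl]
  -- second derivative via chain rule
  have h3 : HasDerivAt (fun σ => f (s σ) • v (s σ) I)
      (f l₀ • ((m I)⁻¹ • (-(f l₀)⁻¹ • particleGrad N V (q l₀) I))) (τ l₀) := by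
    have := HasDerivAt.scomp (τ l₀)
      (by rw [hs l₀ hl₀]; exact h2 l₀ hl₀) (hsder l₀ hl₀)
    simpa [hs l₀ hl₀, Function.comp_def] using this
  have h4 : deriv (deriv fun u => q (s u) I) (τ l₀)
      = f l₀ • ((m I)⁻¹ • (-(f l₀)⁻¹ • particleGrad N V (q l₀) I)) := by
    rw [hev.deriv_eq]
    exact h3.deriv
  rw [h4, hs l₀ hl₀]
  rw [smul_smul, smul_smul, smul_smul]
  have hf0 : f l₀ ≠ 0 := (hfpos l₀ hl₀).ne'
  have hscal : m I * f l₀ * (m I)⁻¹ * -(f l₀)⁻¹ = -1 := by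
    field_simp [(hm I).ne']
  rw [hscal, neg_one_smul]
end

section
/- Poincaré's defect — relational initial data do not determine Newtonian evolution: there exist ε > 0 and two twice differentiable curves q, q̂ : [0, ε) → ℝ³ × ℝ³, each solving the equal-mass two-body gravitational equations q̈₁(t) = (q₂(t) − q₁(t))/‖q₂(t) − q₁(t)‖³ and q̈₂(t) = (q₁(t) − q₂(t))/‖q₁(t) − q₂(t)‖³ with q₁(t) ≠ q₂(t) throughout, such that the separation functions r(t) = ‖q₁(t) − q₂(t)‖ and r̂(t) = ‖q̂₁(t) − q̂₂(t)‖ satisfy r(0) = r̂(0) and r′(0) = r̂′(0) = 0, and yet r(t₀) ≠ r̂(t₀) for some t₀ ∈ (0, ε). -/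
open Real Set Filter Topology

noncomputable def E0 : EuclideanSpace ℝ (Fin 3) := EuclideanSpace.single 0 1
noncomputable def E1 : EuclideanSpace ℝ (Fin 3) := EuclideanSpace.single 1 1

lemma norm_combo (a b : ℝ) : ‖a • E0 + b • E1‖ = Real.sqrt (a ^ 2 + b ^ 2) := by
  rw [EuclideanSpace.norm_eq]
  congr 1
  rw [Fin.sum_univ_three]
  simp [E0, E1, EuclideanSpace.single_apply, PiLp.add_apply, PiLp.smul_apply, Real.norm_eq_abs,
    sq_abs]

lemma norm_E0 : ‖E0‖ = 1 := by simp [E0]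

/-- **Poincaré's defect.** There exist `ε > 0` and two solutions of the
equal-mass two-body gravitational equations on `[0, ε)` (with positions, velocities and
accelerations `q, v, a` and `qh, vh, ah`, and distinct particle positions throughout) whose
separation functions have identical relational initial data — `r(0) = r̂(0)` and
`r′(0) = r̂′(0) = 0` — and yet differ at some later time `t₀ ∈ (0, ε)`. -/
theorem relational_data_insufficient :
    ∃ ε : ℝ, 0 < ε ∧
      ∃ q qh v vh a ah : ℝ → Fin 2 → EuclideanSpace ℝ (Fin 3),
        (∀ t ∈ Set.Ico (0 : ℝ) ε, q t 0 ≠ q t 1) ∧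
        (∀ t ∈ Set.Ico (0 : ℝ) ε, qh t 0 ≠ qh t 1) ∧
        (∀ I, ∀ t ∈ Set.Ico (0 : ℝ) ε, HasDerivAt (fun u => q u I) (v t I) t) ∧
        (∀ I, ∀ t ∈ Set.Ico (0 : ℝ) ε, HasDerivAt (fun u => v u I) (a t I) t) ∧
        (∀ I K : Fin 2, K ≠ I → ∀ t ∈ Set.Ico (0 : ℝ) ε,
          a t I = (‖q t K - q t I‖ ^ 3)⁻¹ • (q t K - q t I)) ∧
        (∀ I, ∀ t ∈ Set.Ico (0 : ℝ) ε, HasDerivAt (fun u => qh u I) (vh t I) t) ∧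
        (∀ I, ∀ t ∈ Set.Ico (0 : ℝ) ε, HasDerivAt (fun u => vh u I) (ah t I) t) ∧
        (∀ I K : Fin 2, K ≠ I → ∀ t ∈ Set.Ico (0 : ℝ) ε,
          ah t I = (‖qh t K - qh t I‖ ^ 3)⁻¹ • (qh t K - qh t I)) ∧
        ‖q 0 0 - q 0 1‖ = ‖qh 0 0 - qh 0 1‖ ∧
        HasDerivAt (fun t => ‖q t 0 - q t 1‖) 0 0 ∧
        HasDerivAt (fun t => ‖qh t 0 - qh t 1‖) 0 0 ∧
        ∃ t₀ ∈ Set.Ioo (0 : ℝ) ε, ‖q t₀ 0 - q t₀ 1‖ ≠ ‖qh t₀ 0 - qh t₀ 1‖ := by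
  -- radius of the circular orbit
  set r₀ : ℝ := (4 : ℝ) ^ (-(1/3) : ℝ) with hr₀def
  have hr₀ : 0 < r₀ := Real.rpow_pos_of_pos (by norm_num) _
  have hr3 : r₀ ^ 3 = 4⁻¹ := by
    rw [hr₀def, ← Real.rpow_natCast ((4:ℝ) ^ (-(1/3) : ℝ)) 3, ← Real.rpow_mul (by norm_num)]
    norm_num
  -- the circular solution
  set c : ℝ → EuclideanSpace ℝ (Fin 3) :=
    fun t => (r₀ * Real.cos t) • E0 + (r₀ * Real.sin t) • E1 with hc
  set c' : ℝ → EuclideanSpace ℝ (Fin 3) :=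
    fun t => (r₀ * -Real.sin t) • E0 + (r₀ * Real.cos t) • E1 with hc'
  have hcnorm : ∀ t, ‖c t‖ = r₀ := by
    intro t
    rw [hc, norm_combo]
    have : (r₀ * Real.cos t) ^ 2 + (r₀ * Real.sin t) ^ 2 = r₀ ^ 2 := by
      have := Real.sin_sq_add_cos_sq t; nlinarith
    rw [this, Real.sqrt_sq hr₀.le]
  have hcderiv : ∀ t, HasDerivAt c (c' t) t := by
    intro t
    exact (((Real.hasDerivAt_cos t).const_mul r₀).smul_const E0).add
      (((Real.hasDerivAt_sin t).const_mul r₀).smul_const E1)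
  have hc'deriv : ∀ t, HasDerivAt c' (-c t) t := by
    intro t
    have h : HasDerivAt c' ((r₀ * -Real.cos t) • E0 + (r₀ * -Real.sin t) • E1) t := by
      exact ((((Real.hasDerivAt_sin t).neg.const_mul r₀).smul_const E0)).add
        (((Real.hasDerivAt_cos t).const_mul r₀).smul_const E1)
    convert h using 1
    show -((r₀ * Real.cos t) • E0 + (r₀ * Real.sin t) • E1) = _
    module
  -- the radial (head-on) solution via Picard–Lindelöf
  set vf : ℝ × ℝ → ℝ × ℝ := fun y => (y.2, -(4 * y.1 ^ 2)⁻¹) with hvf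
  have hvfc : ContDiffAt ℝ 1 vf (r₀, 0) := by
    apply ContDiffAt.prodMk
    · exact contDiff_snd.contDiffAt
    · apply ContDiffAt.neg
      apply ContDiffAt.inv
      · exact ((contDiff_fst.pow 2).const_smul (4:ℝ)).contDiffAt
      · positivity
  obtain ⟨f, hf0, ε₁, hε₁, hfd⟩ := hvfc.exists_forall_mem_closedBall_exists_eq_forall_mem_Ioo_hasDerivAt₀ 0
  simp only [zero_sub, zero_add] at hfd
  set x : ℝ → ℝ := fun t => (f t).1 with hxdef
  set p : ℝ → ℝ := fun t => (f t).2 with hpdef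
  have hx0 : x 0 = r₀ := by rw [hxdef]; simp [hf0]
  have hp0 : p 0 = 0 := by rw [hpdef]; simp [hf0]
  have hx : ∀ t ∈ Ioo (-ε₁) ε₁, HasDerivAt x (p t) t := fun t ht => (hfd t ht).fst
  have hp : ∀ t ∈ Ioo (-ε₁) ε₁, HasDerivAt p (-(4 * (x t) ^ 2)⁻¹) t := fun t ht => (hfd t ht).snd
  -- x stays close to r₀ near 0
  have hxc : ContinuousAt x 0 := (hx 0 (by constructor <;> linarith)).continuousAt
  have hev : ∀ᶠ t in 𝓝 (0:ℝ), r₀ / 2 < x t := by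
    have : Ioi (r₀ / 2) ∈ 𝓝 (x 0) := Ioi_mem_nhds (by rw [hx0]; linarith)
    exact hxc this
  obtain ⟨δ, hδpos, hδ⟩ := Metric.eventually_nhds_iff.mp hev
  set ε : ℝ := min ε₁ δ with hεdef
  have hε : 0 < ε := lt_min hε₁ hδpos
  have hsub : ∀ t ∈ Ico (0:ℝ) ε, t ∈ Ioo (-ε₁) ε₁ := by
    intro t ht
    constructor
    · linarith [ht.1]
    · exact lt_of_lt_of_le ht.2 (min_le_left _ _)
  have hxpos : ∀ t ∈ Ico (0:ℝ) ε, 0 < x t := by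
    intro t ht
    have : dist t 0 < δ := by
      rw [Real.dist_eq, sub_zero, abs_of_nonneg ht.1]
      exact lt_of_lt_of_le ht.2 (min_le_right _ _)
    linarith [hδ this]
  -- separations
  have hsep1 : ∀ t, c t - (-c t) = (2:ℝ) • c t := by
    intro t; module
  have hsep1' : ∀ t, (-c t) - c t = (-2:ℝ) • c t := by
    intro t; module
  have hnorm2c : ∀ t, ‖(2:ℝ) • c t‖ = 2 * r₀ := by
    intro t; rw [norm_smul, hcnorm]; simp
  have hnormneg2c : ∀ t, ‖(-2:ℝ) • c t‖ = 2 * r₀ := by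
    intro t; rw [norm_smul, hcnorm]; simp
  have h2r3 : (2 * r₀) ^ 3 = 2 := by
    have : (2 * r₀) ^ 3 = 8 * r₀ ^ 3 := by ring
    rw [this, hr3]; norm_num
  have hsep2 : ∀ t, (x t • E0) - ((-(x t)) • E0) = (2 * x t) • E0 := by
    intro t; module
  have hsep2' : ∀ t, ((-(x t)) • E0) - (x t • E0) = (-(2 * x t)) • E0 := by
    intro t; module
  have hnorm2x : ∀ t, 0 < x t → ‖(2 * x t) • E0‖ = 2 * x t := by
    intro t hxt; rw [norm_smul, norm_E0, mul_one, Real.norm_eq_abs, abs_of_pos (by linarith)]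
  have hnormneg2x : ∀ t, 0 < x t → ‖(-(2 * x t)) • E0‖ = 2 * x t := by
    intro t hxt
    rw [norm_smul, norm_E0, mul_one, Real.norm_eq_abs, abs_neg, abs_of_pos (by linarith)]
  refine ⟨ε, hε,
    (fun t => ![c t, -c t]),
    (fun t => ![x t • E0, (-(x t)) • E0]),
    (fun t => ![c' t, -c' t]),
    (fun t => ![p t • E0, (-(p t)) • E0]),
    (fun t => ![-c t, c t]),
    (fun t => ![(-(4 * (x t) ^ 2)⁻¹) • E0, ((4 * (x t) ^ 2)⁻¹) • E0]),
    ?_, ?_, ?_, ?_, ?_, ?_, ?_, ?_, ?_, ?_, ?_, ?_⟩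
  · -- circular: distinct positions
    intro t ht
    simp only [Matrix.cons_val_zero, Matrix.cons_val_one, Matrix.head_cons]
    intro h
    have h2 : c t - (-c t) = 0 := sub_eq_zero.mpr h
    rw [hsep1] at h2
    have := hnorm2c t
    rw [h2, norm_zero] at this
    linarith
  · -- radial: distinct positions
    intro t ht
    simp only [Matrix.cons_val_zero, Matrix.cons_val_one, Matrix.head_cons]
    intro h
    have h2 : (x t • E0) - ((-(x t)) • E0) = 0 := sub_eq_zero.mpr h
    rw [hsep2 t] at h2
    have := hnorm2x t (hxpos t ht)
    rw [h2, norm_zero] at this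
    linarith [hxpos t ht]
  · -- circular: q' = v
    intro I t ht
    fin_cases I
    · simpa using hcderiv t
    · simp; exact (hcderiv t).neg
  · -- circular: v' = a
    intro I t ht
    fin_cases I
    · simpa using hc'deriv t
    · simp; exact (neg_neg (c t)) ▸ (hc'deriv t).neg
  · -- circular: Newton's equations
    intro I K hKI t ht
    fin_cases I <;> fin_cases K <;> simp only [Fin.mk_zero, Fin.mk_one, Fin.isValue,
      Matrix.cons_val_zero, Matrix.cons_val_one, Matrix.head_cons] at hKI ⊢
    · exact absurd rfl hKI
    · rw [hsep1', hnormneg2c, h2r3, smul_smul]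
      norm_num
    · rw [hsep1, hnorm2c, h2r3, smul_smul]
      norm_num
    · exact absurd rfl hKI
  · -- radial: qh' = vh
    intro I t ht
    fin_cases I
    · simpa using (hx t (hsub t ht)).smul_const E0
    · simpa using ((hx t (hsub t ht)).neg).smul_const E0
  · -- radial: vh' = ah
    intro I t ht
    fin_cases I
    · simpa using (hp t (hsub t ht)).smul_const E0
    · simpa using ((hp t (hsub t ht)).neg).smul_const E0
  · -- radial: Newton's equations
    intro I K hKI t ht
    have hxt := hxpos t ht
    fin_cases I <;> fin_cases K <;> simp only [Fin.mk_zero, Fin.mk_one, Fin.isValue,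
      Matrix.cons_val_zero, Matrix.cons_val_one, Matrix.head_cons] at hKI ⊢
    · exact absurd rfl hKI
    · rw [hsep2', hnormneg2x t hxt, smul_smul]
      congr 1
      have hne : x t ≠ 0 := ne_of_gt hxt
      field_simp
      ring
    · rw [hsep2, hnorm2x t hxt, smul_smul]
      congr 1
      have hne : x t ≠ 0 := ne_of_gt hxt
      field_simp
      ring
    · exact absurd rfl hKI
  · -- equal initial separations
    simp only [Matrix.cons_val_zero, Matrix.cons_val_one, Matrix.head_cons]
    rw [hsep1, hsep2, hnorm2c, hnorm2x 0 (by rw [hx0]; exact hr₀), hx0]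
  · -- circular separation has zero derivative at 0
    have : (fun t => ‖(![c t, -c t] : Fin 2 → EuclideanSpace ℝ (Fin 3)) 0 -
        (![c t, -c t] : Fin 2 → EuclideanSpace ℝ (Fin 3)) 1‖) = fun _ => 2 * r₀ := by
      funext t
      simp only [Matrix.cons_val_zero, Matrix.cons_val_one, Matrix.head_cons]
      rw [hsep1, hnorm2c]
    rw [this]
    exact hasDerivAt_const 0 (2 * r₀)
  · -- radial separation has zero derivative at 0
    have hbase : HasDerivAt (fun t => 2 * x t) 0 0 := by
      have := (hx 0 (by constructor <;> linarith)).const_mul 2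
      rwa [hp0, mul_zero] at this
    apply hbase.congr_of_eventuallyEq
    filter_upwards [hev] with t hxt
    simp only [Matrix.cons_val_zero, Matrix.cons_val_one, Matrix.head_cons]
    rw [hsep2, hnorm2x t (by linarith)]
  · -- the separations differ at some later time
    have key : ∃ t₀ ∈ Ioo (0:ℝ) ε, x t₀ ≠ r₀ := by
      by_contra h
      push_neg at h
      set s : ℝ := ε / 2 with hsdef
      have hs : s ∈ Ioo (0:ℝ) ε := by constructor <;> [positivity; linarith]
      have hmem : Ioo (0:ℝ) ε ∈ 𝓝 s := isOpen_Ioo.mem_nhds hs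
      have hIoo_sub : ∀ u ∈ Ioo (0:ℝ) ε, u ∈ Ioo (-ε₁) ε₁ := fun u hu =>
        hsub u ⟨hu.1.le, hu.2⟩
      -- p vanishes on Ioo 0 ε
      have hpz : ∀ u ∈ Ioo (0:ℝ) ε, p u = 0 := by
        intro u hu
        have hconst : x =ᶠ[𝓝 u] fun _ => r₀ := by
          filter_upwards [isOpen_Ioo.mem_nhds hu] with w hw
          exact h w hw
        have h1 : HasDerivAt x 0 u :=
          (hasDerivAt_const u r₀).congr_of_eventuallyEq hconst
        exact (hx u (hIoo_sub u hu)).unique h1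
      have hpconst : p =ᶠ[𝓝 s] fun _ => 0 := by
        filter_upwards [hmem] with w hw
        exact hpz w hw
      have h2 : HasDerivAt p 0 s :=
        (hasDerivAt_const s (0:ℝ)).congr_of_eventuallyEq hpconst
      have h3 := (hp s (hIoo_sub s hs)).unique h2
      rw [h s hs] at h3
      have : (4 * r₀ ^ 2)⁻¹ > 0 := by positivity
      rw [neg_eq_zero] at h3
      linarith
    obtain ⟨t₀, ht₀, hne⟩ := key
    refine ⟨t₀, ht₀, ?_⟩
    simp only [Matrix.cons_val_zero, Matrix.cons_val_one, Matrix.head_cons]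
    rw [hsep1, hsep2, hnorm2c, hnorm2x t₀ (hxpos t₀ ⟨ht₀.1.le, ht₀.2⟩)]
    intro h
    exact hne (by linarith)
end
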